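/- Let U ⊆ Ω ⊆ ℂ be symmetric open sets with the following Runge property: for every function h holomorphic on U, every compact set C ⊆ U and every δ > 0 there exists a function holomorphic on Ω whose restriction to C is uniformly δ-close to h. Let K ⊆ U be a symmetric compact set, let f : U → ℂ be holomorphic and Schwarz symmetric, and let ε > 0. Then there exists a holomorphic Schwarz symmetric function g : Ω → ℂ such that sup_{z ∈ K} |f(z) − g(z)| < ε. -/
import Mathlib


open Set

open Topology Filter

lemma conj_conj_hasDerivAt {H : ℂ → ℂ} {d z : ℂ} (h : HasDerivAt H d ((starRingEnd ℂ) z)) :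
    HasDerivAt (fun w => (starRingEnd ℂ) (H ((starRingEnd ℂ) w))) ((starRingEnd ℂ) d) z := by
  rw [hasDerivAt_iff_tendsto_slope] at h ⊢
  have hconj : Filter.Tendsto (starRingEnd ℂ) (𝓝[≠] z) (𝓝[≠] ((starRingEnd ℂ) z)) := by
    apply tendsto_nhdsWithin_of_tendsto_nhds_of_eventually_within
    · exact (Complex.continuous_conj.tendsto z).mono_left nhdsWithin_le_nhds
    · filter_upwards [self_mem_nhdsWithin] with w hw
      simp only [mem_compl_iff, mem_singleton_iff] at hw ⊢
      exact fun hc => hw (by simpa using congrArg (starRingEnd ℂ) hc)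
  have := (Complex.continuous_conj.tendsto d).comp (h.comp hconj)
  refine this.congr' ?_
  filter_upwards [self_mem_nhdsWithin] with w hw
  simp only [Function.comp_apply, slope_def_field]
  simp [map_sub]

/-- Symmetric Runge approximation: if `U ⊆ Ω` are symmetric open subsets of `ℂ` such
that holomorphic functions on `U` can be approximated uniformly on compacts by
holomorphic functions on `Ω`, then Schwarz symmetric holomorphic functions on `U`
can be approximated uniformly on symmetric compact sets by Schwarz symmetric
holomorphic functions on `Ω`. -/
theorem symmetric_runge_approximation (U Ω : Set ℂ)
    (hUopen : IsOpen U) (hΩopen : IsOpen Ω) (hUΩ : U ⊆ Ω)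
    (hUsym : (starRingEnd ℂ) '' U = U) (hΩsym : (starRingEnd ℂ) '' Ω = Ω)
    (hRunge : ∀ h : ℂ → ℂ, DifferentiableOn ℂ h U →
      ∀ C : Set ℂ, IsCompact C → C ⊆ U → ∀ δ : ℝ, 0 < δ →
        ∃ H : ℂ → ℂ, DifferentiableOn ℂ H Ω ∧ ∀ z ∈ C, ‖h z - H z‖ ≤ δ)
    (K : Set ℂ) (hK : IsCompact K) (hKU : K ⊆ U) (hKsym : (starRingEnd ℂ) '' K = K)
    (f : ℂ → ℂ) (hf : DifferentiableOn ℂ f U)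
    (hfsym : ∀ z ∈ U, f ((starRingEnd ℂ) z) = (starRingEnd ℂ) (f z))
    (ε : ℝ) (hε : 0 < ε) :
    ∃ g : ℂ → ℂ, DifferentiableOn ℂ g Ω ∧
      (∀ z ∈ Ω, g ((starRingEnd ℂ) z) = (starRingEnd ℂ) (g z)) ∧
      ∀ z ∈ K, ‖f z - g z‖ < ε := by
  obtain ⟨H, hHdiff, hHclose⟩ := hRunge f hf K hK hKU (ε / 2) (by positivity)
  have hΩconj : ∀ z ∈ Ω, (starRingEnd ℂ) z ∈ Ω := by
    intro z hz
    rw [← hΩsym] at hz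
    obtain ⟨w, hw, rfl⟩ := hz
    simpa using hw
  have hKconj : ∀ z ∈ K, (starRingEnd ℂ) z ∈ K := by
    intro z hz
    rw [← hKsym] at hz
    obtain ⟨w, hw, rfl⟩ := hz
    simpa using hw
  refine ⟨fun z => (H z + (starRingEnd ℂ) (H ((starRingEnd ℂ) z))) / 2, ?_, ?_, ?_⟩
  · apply DifferentiableOn.div_const
    apply hHdiff.add
    intro z hz
    have h1 : DifferentiableAt ℂ H ((starRingEnd ℂ) z) :=
      (hHdiff ((starRingEnd ℂ) z) (hΩconj z hz)).differentiableAt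
        (hΩopen.mem_nhds (hΩconj z hz))
    exact (conj_conj_hasDerivAt h1.hasDerivAt).differentiableAt.differentiableWithinAt
  · intro z hz
    simp only [Complex.conj_conj, map_div₀, map_add, map_ofNat]
    ring
  · intro z hz
    have key : f z - (H z + (starRingEnd ℂ) (H ((starRingEnd ℂ) z))) / 2 =
        ((f z - H z) + (starRingEnd ℂ) (f ((starRingEnd ℂ) z) - H ((starRingEnd ℂ) z))) / 2 := by
      rw [map_sub, hfsym z (hKU hz), Complex.conj_conj]
      ring
    rw [key, norm_div]
    have h1 := hHclose z hz
    have h2 := hHclose _ (hKconj z hz)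
    have h3 := norm_add_le (f z - H z) ((starRingEnd ℂ) (f ((starRingEnd ℂ) z) - H ((starRingEnd ℂ) z)))
    rw [RCLike.norm_conj] at h3
    have : ‖(2 : ℂ)‖ = 2 := by norm_num
    rw [this]
    linarith
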